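/- For density matrices σ, ρ of the same dimension, tr(|σ^{1/2} ρ^{1/2}|) ≤ (tr σ + tr ρ)/2 = 1 (the tracial arithmetic–geometric mean inequality), with equality if and only if σ = ρ. -/

import Mathlib

open scoped Matrix ComplexOrder

/-- The positive square root of a positive semidefinite matrix (junk value `0` otherwise). -/
noncomputable def matSqrt {d : ℕ} (x : Matrix (Fin d) (Fin d) ℂ) : Matrix (Fin d) (Fin d) ℂ :=
  @dite _ x.PosSemidef (Classical.propDecidable _) (fun h => (h.1.eigenvectorUnitary : Matrix (Fin d) (Fin d) ℂ) *
    Matrix.diagonal ((↑) ∘ (fun i => Real.sqrt (h.1.eigenvalues i))) *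
    (star h.1.eigenvectorUnitary : Matrix (Fin d) (Fin d) ℂ)) (fun _ => 0)

/-- The absolute value `|x| = (xᴴx)^{1/2}` of a matrix. -/
noncomputable def matAbs {d : ℕ} (x : Matrix (Fin d) (Fin d) ℂ) : Matrix (Fin d) (Fin d) ℂ :=
  matSqrt (xᴴ * x)

/-- Fidelity `F(σ,ρ) = tr |σ^{1/2} ρ^{1/2}|`. -/
noncomputable def fid {d : ℕ} (σ ρ : Matrix (Fin d) (Fin d) ℂ) : ℝ :=
  (matAbs (matSqrt σ * matSqrt ρ)).trace.re

/-- Bures distance `d_B(σ,ρ) = √(1 - F(σ,ρ))`. -/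
noncomputable def dB {d : ℕ} (σ ρ : Matrix (Fin d) (Fin d) ℂ) : ℝ :=
  Real.sqrt (1 - fid σ ρ)

noncomputable def Matrix.PosSemidef.sqrt {d : ℕ} {x : Matrix (Fin d) (Fin d) ℂ} (h : x.PosSemidef) :
    Matrix (Fin d) (Fin d) ℂ :=
  (h.1.eigenvectorUnitary : Matrix (Fin d) (Fin d) ℂ) *
    Matrix.diagonal ((↑) ∘ (fun i => Real.sqrt (h.1.eigenvalues i))) *
    (star h.1.eigenvectorUnitary : Matrix (Fin d) (Fin d) ℂ)

lemma Matrix.PosSemidef.posSemidef_sqrt {d : ℕ} {x : Matrix (Fin d) (Fin d) ℂ} (h : x.PosSemidef) :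
    h.sqrt.PosSemidef := by
  have hD : (Matrix.diagonal ((↑) ∘ (fun i => Real.sqrt (h.1.eigenvalues i))) :
      Matrix (Fin d) (Fin d) ℂ).PosSemidef := by
    rw [Matrix.posSemidef_diagonal_iff]
    intro i
    simp [Real.sqrt_nonneg]
  have := hD.mul_mul_conjTranspose_same (h.1.eigenvectorUnitary : Matrix (Fin d) (Fin d) ℂ)
  simp only [Matrix.PosSemidef.sqrt, Unitary.coe_star, Matrix.star_eq_conjTranspose]
  exact this

lemma Matrix.PosSemidef.sqrt_mul_self {d : ℕ} {x : Matrix (Fin d) (Fin d) ℂ} (h : x.PosSemidef) :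
    h.sqrt * h.sqrt = x := by
  conv_rhs => rw [h.1.spectral_theorem, Unitary.conjStarAlgAut_apply]
  simp only [Matrix.PosSemidef.sqrt, Matrix.mul_assoc]
  rw [← Matrix.mul_assoc (star (h.1.eigenvectorUnitary : Matrix (Fin d) (Fin d) ℂ)),
    Unitary.coe_star_mul_self, Matrix.one_mul, ← Matrix.mul_assoc (Matrix.diagonal _),
    Matrix.diagonal_mul_diagonal]
  congr 3
  funext i
  simp only [Function.comp_apply]
  rw [← Complex.ofReal_mul, Real.mul_self_sqrt (h.eigenvalues_nonneg i)]
  rfl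

lemma Matrix.PosSemidef.sqrt_eq_cfc {d : ℕ} {x : Matrix (Fin d) (Fin d) ℂ} (h : x.PosSemidef) :
    h.sqrt = cfc Real.sqrt x := by
  rw [h.1.cfc_eq]
  rfl

lemma Matrix.PosSemidef.eq_sqrt_of_sq_eq {d : ℕ} {A : Matrix (Fin d) (Fin d) ℂ} (hA : A.PosSemidef)
    {B : Matrix (Fin d) (Fin d) ℂ} (hB : B.PosSemidef) (hsq : A ^ 2 = B) : A = hB.sqrt := by
  rw [hB.sqrt_eq_cfc, ← hsq]
  have hsa : IsSelfAdjoint A := hA.1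
  rw [← cfc_comp_pow Real.sqrt 2 A]
  conv_lhs => rw [← cfc_id' ℝ A]
  refine cfc_congr fun t ht => ?_
  rw [hA.1.spectrum_real_eq_range_eigenvalues] at ht
  obtain ⟨i, rfl⟩ := ht
  simp [Real.sqrt_sq (hA.eigenvalues_nonneg i)]
lemma matSqrt_of {d : ℕ} {x : Matrix (Fin d) (Fin d) ℂ} (h : x.PosSemidef) :
    matSqrt x = h.sqrt := by
  unfold matSqrt
  rw [dif_pos h]
  rfl

lemma trace_ctms_nonneg {d : ℕ} (A : Matrix (Fin d) (Fin d) ℂ) :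
    0 ≤ (Aᴴ * A).trace := by
  rw [Matrix.trace]
  refine Finset.sum_nonneg fun i _ => ?_
  rw [Matrix.diag_apply, Matrix.mul_apply]
  refine Finset.sum_nonneg fun j _ => ?_
  simpa [Matrix.conjTranspose_apply] using star_mul_self_nonneg (A j i)

lemma eq_zero_of_trace_ctms {d : ℕ} {A : Matrix (Fin d) (Fin d) ℂ}
    (h : (Aᴴ * A).trace = 0) : A = 0 := by
  have key : ∑ i, ∑ j, star (A j i) * A j i = 0 := by
    rw [← h, Matrix.trace]
    simp [Matrix.mul_apply, Matrix.conjTranspose_apply, Matrix.diag_apply]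
  rw [Finset.sum_eq_zero_iff_of_nonneg
    (fun i _ => Finset.sum_nonneg fun j _ => star_mul_self_nonneg _)] at key
  ext j i
  have := key i (Finset.mem_univ i)
  rw [Finset.sum_eq_zero_iff_of_nonneg (fun j _ => star_mul_self_nonneg _)] at this
  have := this j (Finset.mem_univ j)
  simpa [mul_eq_zero, star_eq_zero] using this

lemma psd_trace_mul {d : ℕ} {S T : Matrix (Fin d) (Fin d) ℂ}
    (hS : S.PosSemidef) (hT : T.PosSemidef) :
    0 ≤ (S * T).trace ∧ ((S * T).trace = 0 → S * T = 0) := by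
  have hMH : (hT.sqrt * hS.sqrt)ᴴ = hS.sqrt * hT.sqrt := by
    rw [Matrix.conjTranspose_mul, hS.posSemidef_sqrt.1, hT.posSemidef_sqrt.1]
  have e1 : (hT.sqrt * hS.sqrt)ᴴ * (hT.sqrt * hS.sqrt) = hS.sqrt * (T * hS.sqrt) := by
    rw [hMH, Matrix.mul_assoc, ← Matrix.mul_assoc hT.sqrt, hT.sqrt_mul_self]
  have e2 : ((hT.sqrt * hS.sqrt)ᴴ * (hT.sqrt * hS.sqrt)).trace = (S * T).trace := by
    conv_lhs => rw [e1, Matrix.trace_mul_comm, Matrix.mul_assoc, hS.sqrt_mul_self,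
      Matrix.trace_mul_comm]
  refine ⟨e2 ▸ trace_ctms_nonneg _, fun h0 => ?_⟩
  have hM0 : hT.sqrt * hS.sqrt = 0 := eq_zero_of_trace_ctms (by rw [e2, h0])
  have e3 : hS.sqrt * (hT.sqrt * hS.sqrt)ᴴ * hT.sqrt = S * T := by
    rw [hMH]
    simp only [Matrix.mul_assoc]
    rw [hT.sqrt_mul_self, ← Matrix.mul_assoc, hS.sqrt_mul_self]
  rw [← e3, hM0]
  simp


lemma polar_aux {d : ℕ} (X U H : Matrix (Fin d) (Fin d) ℂ) (e : Fin d → ℝ)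
    (hU : star U * U = 1)
    (hspec : H = U * Matrix.diagonal (fun i => ((e i : ℝ) : ℂ)) * star U)
    (hHH : H * H = Xᴴ * X) :
    ∃ W : Matrix (Fin d) (Fin d) ℂ, Wᴴ * X = H ∧ W * (Wᴴ * W) = W := by
  set f : Fin d → ℂ := fun i => ((e i : ℝ) : ℂ) with hfdef
  set g : Fin d → ℂ := fun i => if e i = 0 then 0 else (f i)⁻¹ with hgdef
  set s : (Fin d → ℂ) → Matrix (Fin d) (Fin d) ℂ :=
    fun a => U * Matrix.diagonal a * star U with hsdef
  have smul : ∀ a b, s a * s b = s (fun i => a i * b i) := by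
    intro a b
    calc s a * s b
        = U * (Matrix.diagonal a * ((star U * U) * (Matrix.diagonal b * star U))) := by
          simp only [hsdef, Matrix.mul_assoc]
      _ = s (fun i => a i * b i) := by
          rw [hU, Matrix.one_mul, ← Matrix.mul_assoc (Matrix.diagonal a),
            Matrix.diagonal_mul_diagonal]
          simp only [hsdef, Matrix.mul_assoc]
  have hf0 : ∀ i, e i = 0 → f i = 0 := fun i h => by simp [hfdef, h]
  have hfinv : ∀ i, e i ≠ 0 → (f i)⁻¹ * f i = 1 := fun i h =>
    inv_mul_cancel₀ (by simpa [hfdef] using h)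
  have hgstar : star g = g := by
    funext i
    by_cases h : e i = 0 <;>
      simp [hgdef, hfdef, h, Pi.star_apply, star_inv₀, Complex.conj_ofReal]
  have hsgH : (s g)ᴴ = s g := by
    simp only [hsdef, Matrix.conjTranspose_mul, Matrix.diagonal_conjTranspose,
      Matrix.star_eq_conjTranspose, Matrix.conjTranspose_conjTranspose, ← Matrix.mul_assoc]
    rw [show (star g) = g from hgstar]
  refine ⟨X * s g, ?_, ?_⟩
  · have h1 : (X * s g)ᴴ * X = s g * (Xᴴ * X) := by
      rw [Matrix.conjTranspose_mul, hsgH, Matrix.mul_assoc]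
    rw [h1, ← hHH, hspec, show U * Matrix.diagonal f * star U = s f from rfl,
      smul f f, smul g _]
    refine congrArg s (funext fun i => ?_)
    by_cases h : e i = 0
    · simp [hgdef, h, hf0 i h]
    · simp only [hgdef, if_neg h, ← mul_assoc, hfinv i h, one_mul]
  · have h1 : (X * s g)ᴴ * (X * s g) = s g * (s f * s f) * s g := by
      rw [Matrix.conjTranspose_mul, hsgH, show s f = H from hspec.symm, hHH]
      simp only [Matrix.mul_assoc]
    have e5 : s g * (s g * (s f * s f) * s g) = s g := by
      rw [smul f f, smul g _, smul _ g, smul g _]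
      refine congrArg s (funext fun i => ?_)
      by_cases h : e i = 0
      · simp [hgdef, h]
      · simp only [hgdef, if_neg h]
        have h2 := hfinv i h
        field_simp
    rw [h1, Matrix.mul_assoc, e5]

lemma exists_polar {d : ℕ} (X : Matrix (Fin d) (Fin d) ℂ) :
    ∃ W : Matrix (Fin d) (Fin d) ℂ,
      Wᴴ * X = (Matrix.posSemidef_conjTranspose_mul_self X).sqrt ∧
      W * (Wᴴ * W) = W := by
  have hK := Matrix.posSemidef_conjTranspose_mul_self X
  have hHh : hK.sqrt.IsHermitian := hK.posSemidef_sqrt.1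
  refine polar_aux X (hHh.eigenvectorUnitary : Matrix (Fin d) (Fin d) ℂ) hK.sqrt
    hHh.eigenvalues (Unitary.mem_iff.mp hHh.eigenvectorUnitary.2).1 ?_ hK.sqrt_mul_self
  exact hHh.spectral_theorem

lemma am_gm_core {d : ℕ} (σ ρ A B H W : Matrix (Fin d) (Fin d) ℂ)
    (hσ : σ.PosSemidef) (hA : A.IsHermitian) (hB : B.IsHermitian) (hH : H.IsHermitian)
    (hA2 : A * A = σ) (hB2 : B * B = ρ)
    (hW1 : Wᴴ * (A * B) = H) (hW2 : W * (Wᴴ * W) = W)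
    (hσ1 : σ.trace = 1) (hρ1 : ρ.trace = 1) :
    H.trace.re ≤ 1 ∧ (H.trace.re = 1 → σ = ρ) := by
  set Q := W * Wᴴ with hQdef
  have hQH : Qᴴ = Q := by
    rw [hQdef, Matrix.conjTranspose_mul, Matrix.conjTranspose_conjTranspose]
  have hQQ : Q * Q = Q := by
    have h : Q * Q = (W * (Wᴴ * W)) * Wᴴ := by
      simp only [hQdef, Matrix.mul_assoc]
    rw [h, hW2]
  have h1mQ : (1 - Q).PosSemidef := by
    have h : (1 - Q)ᴴ * (1 - Q) = 1 - Q := by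
      rw [Matrix.conjTranspose_sub, Matrix.conjTranspose_one, hQH, sub_mul, one_mul, mul_sub,
        mul_one, hQQ, sub_self, sub_zero]
    exact h ▸ Matrix.posSemidef_conjTranspose_mul_self (1 - Q)
  have hBAW : B * (A * W) = H := by
    have h := congrArg Matrix.conjTranspose hW1
    rw [Matrix.conjTranspose_mul, Matrix.conjTranspose_mul, Matrix.conjTranspose_conjTranspose,
      hA, hB, hH, Matrix.mul_assoc] at h
    exact h
  have hexp : (A * W - B)ᴴ * (A * W - B)
      = Wᴴ * (A * (A * W)) - Wᴴ * (A * B) - B * (A * W) + B * B := by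
    rw [Matrix.conjTranspose_sub, Matrix.conjTranspose_mul, hA, hB]
    noncomm_ring
  set t0 := ((A * W - B)ᴴ * (A * W - B)).trace with ht0def
  set t1 := ((σ * (1 - Q))).trace with ht1def
  have htrexp : t0 = (σ * Q).trace - H.trace - H.trace + ρ.trace := by
    rw [ht0def, hexp, Matrix.trace_add, Matrix.trace_sub, Matrix.trace_sub]
    congr 1
    · congr 1
      · congr 1
        · rw [Matrix.trace_mul_comm]
          congr 1
          rw [← hA2]
          simp only [Matrix.mul_assoc]
          rfl
        · rw [hW1]
      · rw [hBAW]
    · rw [hB2]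
  have ht1 : t1 = σ.trace - (σ * Q).trace := by
    rw [ht1def, Matrix.mul_sub, Matrix.mul_one, Matrix.trace_sub]
  have hsum : t0 + t1 = σ.trace + ρ.trace - (H.trace + H.trace) := by
    rw [htrexp, ht1]; ring
  have h0' := Complex.le_def.mp (trace_ctms_nonneg (A * W - B))
  have h1' := Complex.le_def.mp (psd_trace_mul hσ h1mQ).1
  have hre : t0.re + t1.re = 2 - (H.trace.re + H.trace.re) := by
    have := congrArg Complex.re hsum
    simp only [Complex.add_re, Complex.sub_re, hσ1, hρ1, Complex.one_re] at this
    linarith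
  have h0re : (0:ℝ) ≤ t0.re := by
    have h := h0'.1; simp only [Complex.zero_re] at h; exact h
  have h1re : (0:ℝ) ≤ t1.re := by
    have h := h1'.1; simp only [Complex.zero_re] at h; exact h
  constructor
  · linarith
  · intro hfe
    have ht0z : t0 = 0 := by
      apply Complex.ext
      · simp only [Complex.zero_re]; linarith
      · simp only [Complex.zero_im]; exact h0'.2.symm
    have ht1z : t1 = 0 := by
      apply Complex.ext
      · simp only [Complex.zero_re]; linarith
      · simp only [Complex.zero_im]; exact h1'.2.symm
    have hAWB : A * W = B := sub_eq_zero.mp (eq_zero_of_trace_ctms ht0z)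
    have hσQ : σ * Q = σ := by
      have h := (psd_trace_mul hσ h1mQ).2 ht1z
      rw [Matrix.mul_sub, Matrix.mul_one, sub_eq_zero] at h
      exact h.symm
    have ht2 : ((Q * A - A)ᴴ * (Q * A - A)).trace = 0 := by
      have hexp2 : (Q * A - A)ᴴ * (Q * A - A)
          = A * (Q * A) - A * (Q * A) - A * (Q * A) + A * A := by
        rw [Matrix.conjTranspose_sub, Matrix.conjTranspose_mul, hA, hQH]
        have h : A * Q * (Q * A) = A * (Q * A) := by
          rw [← Matrix.mul_assoc, Matrix.mul_assoc A Q Q, hQQ, Matrix.mul_assoc]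
        rw [sub_mul, mul_sub, mul_sub, h]
        noncomm_ring
      have hQAA : (A * (Q * A)).trace = σ.trace := by
        rw [Matrix.trace_mul_comm, Matrix.mul_assoc, hA2, Matrix.trace_mul_comm, hσQ]
      rw [hexp2, Matrix.trace_add, Matrix.trace_sub, Matrix.trace_sub, hQAA, hA2]
      ring
    have hQA : Q * A = A := sub_eq_zero.mp (eq_zero_of_trace_ctms ht2)
    have hAQ : A * Q = A := by
      have h := congrArg Matrix.conjTranspose hQA
      rwa [Matrix.conjTranspose_mul, hQH, hA] at h
    calc σ = A * Q * A := by rw [hAQ, hA2]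
      _ = (A * W) * (A * W)ᴴ := by
          rw [Matrix.conjTranspose_mul, hA, hQdef]
          simp only [Matrix.mul_assoc]
      _ = B * Bᴴ := by rw [hAWB]
      _ = ρ := by rw [hB, hB2]

/-- tracial AM-GM: tr|σ^{1/2}ρ^{1/2}| ≤ (tr σ + tr ρ)/2 = 1,
with equality iff σ = ρ. -/
theorem fidelity_am_gm {d : ℕ} (σ ρ : Matrix (Fin d) (Fin d) ℂ)
    (hσ : σ.PosSemidef) (hρ : ρ.PosSemidef)
    (hσ1 : σ.trace = 1) (hρ1 : ρ.trace = 1) :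
    fid σ ρ ≤ (σ.trace.re + ρ.trace.re) / 2 ∧
    (σ.trace.re + ρ.trace.re) / 2 = 1 ∧
    (fid σ ρ = (σ.trace.re + ρ.trace.re) / 2 ↔ σ = ρ) := by
  have hσre : σ.trace.re = 1 := by rw [hσ1]; rfl
  have hρre : ρ.trace.re = 1 := by rw [hρ1]; rfl
  have hhalf : (σ.trace.re + ρ.trace.re) / 2 = 1 := by rw [hσre, hρre]; norm_num
  obtain ⟨W, hW1, hW2⟩ := exists_polar (hσ.sqrt * hρ.sqrt)
  have hfid : fid σ ρ
      = (Matrix.posSemidef_conjTranspose_mul_self (hσ.sqrt * hρ.sqrt)).sqrt.trace.re := by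
    unfold fid matAbs
    rw [matSqrt_of hσ, matSqrt_of hρ,
      matSqrt_of (Matrix.posSemidef_conjTranspose_mul_self (hσ.sqrt * hρ.sqrt))]
  have hcore := am_gm_core σ ρ hσ.sqrt hρ.sqrt
    (Matrix.posSemidef_conjTranspose_mul_self (hσ.sqrt * hρ.sqrt)).sqrt W
    hσ hσ.posSemidef_sqrt.1 hρ.posSemidef_sqrt.1
    (Matrix.posSemidef_conjTranspose_mul_self (hσ.sqrt * hρ.sqrt)).posSemidef_sqrt.1
    hσ.sqrt_mul_self hρ.sqrt_mul_self hW1 hW2 hσ1 hρ1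
  refine ⟨by rw [hfid, hhalf]; exact hcore.1, hhalf, ?_, ?_⟩
  · intro hfe
    rw [hhalf, hfid] at hfe
    exact hcore.2 hfe
  · intro h
    subst h
    rw [hhalf]
    have hK' := Matrix.posSemidef_conjTranspose_mul_self (hσ.sqrt * hσ.sqrt)
    have hsq : σ ^ 2 = (hσ.sqrt * hσ.sqrt)ᴴ * (hσ.sqrt * hσ.sqrt) := by
      rw [hσ.sqrt_mul_self, hσ.1, pow_two]
    have hs : σ = hK'.sqrt := hσ.eq_sqrt_of_sq_eq hK' hsq
    unfold fid matAbs
    rw [matSqrt_of hσ, matSqrt_of hK', ← hs, hσ1]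
    rfl
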